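/- Fix δ ∈ (0,1], γ > 0. Let g be a Borel probability measure on [0,∞) with finite (2+δ)-th moment ∫ w^{2+δ} dg(w) < ∞, and set m = ∫ w dg(w). Let Y be a real random variable with E[Y] = 0, E[Y²] = 1 and E[|Y|^{2+δ}] < ∞, and for λ ∈ (0,1) set η_λ = √(γλ) · Y. Let φ : ℝ → ℝ be bounded with bounded first and second derivatives and with φ'' δ-Hölder continuous. Then the grazing (continuous trading) limit of the collision operator holds: (1/λ) · E[ ∫∫ ( φ((1−λ)w + λv + η_λ w) − φ(w) ) dg(v) dg(w) ] converges, as λ → 0⁺, to −∫ φ'(w)(w − m) dg(w) + (γ/2) ∫ φ''(w) w² dg(w), i.e. to the weak form of the Fokker–Planck operator ∂_w((w−m)g) + (γ/2) ∂²_w(w² g). -/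

import Mathlib

open MeasureTheory ProbabilityTheory Filter
open scoped Topology ENNReal


lemma rpow_add_le_two_rpow (a b p : ℝ) (ha : 0 ≤ a) (hb : 0 ≤ b) (hp : 0 ≤ p) :
    (a + b) ^ p ≤ 2 ^ p * (a ^ p + b ^ p) := by
  have hmax : a + b ≤ 2 * max a b := by
    rcases le_total a b with h | h
    · simp [max_eq_right h]; linarith
    · simp [max_eq_left h]; linarith
  have h1 : (a + b) ^ p ≤ (2 * max a b) ^ p :=
    Real.rpow_le_rpow (by linarith) hmax hp
  have h2 : (2 * max a b) ^ p = 2 ^ p * (max a b) ^ p :=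
    Real.mul_rpow (by norm_num) (le_max_of_le_left ha)
  have h3 : (max a b) ^ p ≤ a ^ p + b ^ p := by
    rcases le_total a b with h | h
    · rw [max_eq_right h]
      have := Real.rpow_nonneg ha p
      linarith
    · rw [max_eq_left h]
      have := Real.rpow_nonneg hb p
      linarith
  calc (a + b) ^ p ≤ 2 ^ p * (max a b) ^ p := by rw [← h2]; exact h1
    _ ≤ 2 ^ p * (a ^ p + b ^ p) := by
        have : (0:ℝ) ≤ 2 ^ p := Real.rpow_nonneg (by norm_num) p
        nlinarith [h3]

lemma abs_rpow_le_one_add (x p q : ℝ) (hp : 0 ≤ p) (hpq : p ≤ q) :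
    |x| ^ p ≤ 1 + |x| ^ q := by
  have hq : (0:ℝ) ≤ |x| ^ q := Real.rpow_nonneg (abs_nonneg x) q
  rcases le_total (|x|) 1 with h | h
  · have : |x| ^ p ≤ 1 := Real.rpow_le_one (abs_nonneg x) h hp
    linarith
  · have : |x| ^ p ≤ |x| ^ q := Real.rpow_le_rpow_of_exponent_le h hpq
    linarith

lemma taylor_holder (δ H : ℝ) (hδ : 0 < δ) (hH : 0 ≤ H)
    (φ φ' φ'' : ℝ → ℝ)
    (hderiv1 : ∀ x, HasDerivAt φ (φ' x) x) (hderiv2 : ∀ x, HasDerivAt φ' (φ'' x) x)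
    (hHolder : ∀ x y, |φ'' x - φ'' y| ≤ H * |x - y| ^ δ) (a b : ℝ) :
    |φ (a + b) - φ a - φ' a * b - φ'' a * b ^ 2 / 2| ≤ H * |b| ^ (2 + δ) := by
  set S := segment ℝ (0:ℝ) b with hS
  have hmem : ∀ u ∈ S, |u| ≤ |b| := by
    intro u hu
    rcases hu with ⟨s, t, hs, ht, hst, rfl⟩
    simp only [smul_eq_mul, mul_zero, zero_add]
    rw [abs_mul]
    calc |t| * |b| ≤ 1 * |b| := by
          apply mul_le_mul_of_nonneg_right _ (abs_nonneg b)
          rw [abs_of_nonneg ht]; linarith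
      _ = |b| := one_mul _
  have h0S : (0:ℝ) ∈ S := left_mem_segment ℝ 0 b
  have hbS : b ∈ S := right_mem_segment ℝ 0 b
  -- inner layer
  have hchi : ∀ t ∈ S, |φ' (a + t) - φ' a - φ'' a * t| ≤ (H * |b| ^ δ) * |t| := by
    intro t ht
    have key := Convex.norm_image_sub_le_of_norm_hasDerivWithin_le
      (f := fun u => φ' (a + u) - φ' a - φ'' a * u)
      (f' := fun u => φ'' (a + u) - φ'' a) (s := S) (C := H * |b| ^ δ)
      (fun u _ => by
        have h1 : HasDerivAt (fun u => φ' (a + u)) (φ'' (a + u)) u := by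
          have := (hderiv2 (a + u)).comp u ((hasDerivAt_id u).const_add a)
          simpa [Function.comp_def] using this
        have h2 : HasDerivAt (fun u : ℝ => φ'' a * u) (φ'' a) u := by
          simpa using (hasDerivAt_id u).const_mul (φ'' a)
        exact ((h1.sub_const (φ' a)).sub h2).hasDerivWithinAt)
      (fun u hu => by
        have h1 : |φ'' (a + u) - φ'' a| ≤ H * |u| ^ δ := by
          simpa using hHolder (a + u) a
        have h2 : |u| ^ δ ≤ |b| ^ δ :=
          Real.rpow_le_rpow (abs_nonneg u) (hmem u hu) hδ.le
        calc ‖φ'' (a + u) - φ'' a‖ = |φ'' (a + u) - φ'' a| := rfl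
          _ ≤ H * |u| ^ δ := h1
          _ ≤ H * |b| ^ δ := mul_le_mul_of_nonneg_left h2 hH)
      (convex_segment 0 b) h0S ht
    simpa using key
  -- outer layer
  have hCnn : 0 ≤ H * |b| ^ δ := mul_nonneg hH (Real.rpow_nonneg (abs_nonneg b) δ)
  have key := Convex.norm_image_sub_le_of_norm_hasDerivWithin_le
    (f := fun u => φ (a + u) - φ a - φ' a * u - φ'' a * u ^ 2 / 2)
    (f' := fun u => φ' (a + u) - φ' a - φ'' a * u) (s := S) (C := H * |b| ^ δ * |b|)
    (fun u _ => by
      have h1 : HasDerivAt (fun u => φ (a + u)) (φ' (a + u)) u := by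
        have := (hderiv1 (a + u)).comp u ((hasDerivAt_id u).const_add a)
        simpa [Function.comp_def] using this
      have h2 : HasDerivAt (fun u : ℝ => φ' a * u) (φ' a) u := by
        simpa using (hasDerivAt_id u).const_mul (φ' a)
      have h3 : HasDerivAt (fun u : ℝ => φ'' a * u ^ 2 / 2) (φ'' a * u) u := by
        have := ((hasDerivAt_pow 2 u).const_mul (φ'' a)).div_const 2
        exact this.congr_deriv (by rw [show (2:ℕ) - 1 = 1 from rfl, pow_one]; push_cast; ring)
      exact (((h1.sub_const (φ a)).sub h2).sub h3).hasDerivWithinAt)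
    (fun u hu => by
      calc ‖φ' (a + u) - φ' a - φ'' a * u‖ = |φ' (a + u) - φ' a - φ'' a * u| := rfl
        _ ≤ (H * |b| ^ δ) * |u| := hchi u hu
        _ ≤ (H * |b| ^ δ) * |b| := mul_le_mul_of_nonneg_left (hmem u hu) hCnn)
    (convex_segment 0 b) h0S hbS
  have hfin : |φ (a + b) - φ a - φ' a * b - φ'' a * b ^ 2 / 2| ≤ H * |b| ^ δ * |b| * |b| := by
    simpa using key
  have hsplit : |b| ^ (2 + δ) = |b| ^ (2:ℝ) * |b| ^ δ :=
    Real.rpow_add' (abs_nonneg b) (by positivity)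
  have h2r : |b| ^ (2:ℝ) = |b| * |b| := by
    rw [show (2:ℝ) = ((2:ℕ):ℝ) by norm_num, Real.rpow_natCast]
    ring
  calc |φ (a + b) - φ a - φ' a * b - φ'' a * b ^ 2 / 2| ≤ H * |b| ^ δ * |b| * |b| := hfin
    _ = H * |b| ^ (2 + δ) := by rw [hsplit, h2r]; ring

set_option maxHeartbeats 2000000

theorem grazing_collision_limit (δ γ : ℝ) (hδ : δ ∈ Set.Ioc (0 : ℝ) 1) (hγ : 0 < γ)
    (g : Measure ℝ) [IsProbabilityMeasure g] (hg_supp : g (Set.Ici (0 : ℝ)) = 1)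
    (hg_mom : Integrable (fun w => |w| ^ (2 + δ)) g)
    {Ω : Type*} [MeasureSpace Ω] [IsProbabilityMeasure (ℙ : Measure Ω)]
    (Y : Ω → ℝ) (hYmeas : Measurable Y)
    (hYint : Integrable Y ℙ) (hYmean : ∫ ω, Y ω ∂ℙ = 0)
    (hY2int : Integrable (fun ω => Y ω ^ 2) ℙ) (hYvar : ∫ ω, Y ω ^ 2 ∂ℙ = 1)
    (hYmom : Integrable (fun ω => |Y ω| ^ (2 + δ)) ℙ)
    (φ φ' φ'' : ℝ → ℝ)
    (hderiv1 : ∀ x, HasDerivAt φ (φ' x) x) (hderiv2 : ∀ x, HasDerivAt φ' (φ'' x) x)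
    (C : ℝ) (hbound : ∀ x, |φ x| ≤ C ∧ |φ' x| ≤ C ∧ |φ'' x| ≤ C)
    (H : ℝ) (hHolder : ∀ x y, |φ'' x - φ'' y| ≤ H * |x - y| ^ δ) :
    Tendsto (fun l : ℝ =>
        (1 / l) * ∫ w : ℝ, (∫ v : ℝ, (∫ ω : Ω,
          (φ ((1 - l) * w + l * v + Real.sqrt (γ * l) * Y ω * w) - φ w) ∂(ℙ : Measure Ω)) ∂g) ∂g)
      (𝓝[Set.Ioo (0 : ℝ) 1] 0)
      (𝓝 (-∫ w, φ' w * (w - ∫ w', w' ∂g) ∂g + (γ / 2) * ∫ w, φ'' w * w ^ 2 ∂g)) := by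
  obtain ⟨hδ0, hδ1⟩ := hδ
  set m : ℝ := ∫ w', w' ∂g with hm
  set L : ℝ := -∫ w, φ' w * (w - m) ∂g + (γ / 2) * ∫ w, φ'' w * w ^ 2 ∂g with hL
  set MY : ℝ := ∫ ω, |Y ω| ^ (2 + δ) ∂ℙ with hMYdef
  set K : ℝ := C + H * 2 ^ (2 + δ) * 2 ^ (2 + δ) + H * 2 ^ (2 + δ) * γ ^ (1 + δ/2) * MY with hK
  set ψ₂ : ℝ → ℝ := fun w => (∫ v, v ^ 2 ∂g) + w ^ 2 + (∫ v, |v| ^ (2 + δ) ∂g) + |w| ^ (2 + δ)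
    with hψ₂
  set Ψ : ℝ := ∫ w, ψ₂ w ∂g with hΨ
  -- global facts
  have hC : 0 ≤ C := le_trans (abs_nonneg _) (hbound 0).1
  have hH : 0 ≤ H := by
    have h := hHolder 0 1
    have : |(0:ℝ) - 1| ^ δ = 1 := by norm_num
    rw [this, mul_one] at h
    exact le_trans (abs_nonneg _) h
  have hφc : Continuous φ := by
    have : Differentiable ℝ φ := fun x => (hderiv1 x).differentiableAt
    exact this.continuous
  have hφ'c : Continuous φ' := by
    have : Differentiable ℝ φ' := fun x => (hderiv2 x).differentiableAt
    exact this.continuous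
  have hφ''m : Measurable φ'' := by
    have hE : φ'' = deriv φ' := funext fun x => ((hderiv2 x).deriv).symm
    rw [hE]; exact measurable_deriv φ'
  have habs2 : ∀ x : ℝ, x ^ 2 ≤ 1 + |x| ^ (2 + δ) := by
    intro x
    have h := abs_rpow_le_one_add x 2 (2 + δ) (by norm_num) (by linarith)
    have : |x| ^ (2:ℝ) = x ^ 2 := by
      rw [show (2:ℝ) = ((2:ℕ):ℝ) by norm_num, Real.rpow_natCast, sq_abs]
    linarith [this ▸ h]
  have habs1 : ∀ x : ℝ, |x| ≤ 1 + |x| ^ (2 + δ) := by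
    intro x
    have h := abs_rpow_le_one_add x 1 (2 + δ) (by norm_num) (by linarith)
    rwa [Real.rpow_one] at h
  have gi2 : Integrable (fun v : ℝ => v ^ 2) g := by
    refine Integrable.mono' ((integrable_const 1).add hg_mom)
      (measurable_id.pow_const 2).aestronglyMeasurable
      (Filter.Eventually.of_forall fun v => ?_)
    rw [Real.norm_eq_abs, abs_of_nonneg (sq_nonneg v)]
    exact habs2 v
  have gi1 : Integrable (fun v : ℝ => v) g := by
    refine Integrable.mono' ((integrable_const 1).add hg_mom)
      measurable_id.aestronglyMeasurable
      (Filter.Eventually.of_forall fun v => ?_)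
    rw [Real.norm_eq_abs]
    exact habs1 v
  have hMY0 : 0 ≤ MY :=
    integral_nonneg fun ω => Real.rpow_nonneg (abs_nonneg _) _
  have h2p : (0:ℝ) ≤ 2 ^ (2 + δ) := Real.rpow_nonneg (by norm_num) _
  have hγp : (0:ℝ) ≤ γ ^ (1 + δ/2) := Real.rpow_nonneg hγ.le _
  have hK0 : 0 ≤ K := by
    rw [hK]
    have := mul_nonneg (mul_nonneg hH h2p) h2p
    have := mul_nonneg (mul_nonneg (mul_nonneg hH h2p) hγp) hMY0
    linarith
  have key : ∀ l ∈ Set.Ioo (0:ℝ) 1,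
      |(1 / l) * (∫ w : ℝ, (∫ v : ℝ, (∫ ω : Ω,
          (φ ((1 - l) * w + l * v + Real.sqrt (γ * l) * Y ω * w) - φ w) ∂(ℙ : Measure Ω)) ∂g) ∂g)
        - L| ≤ (K * Ψ) * l ^ (δ/2) := by
    intro l hl
    obtain ⟨hl0, hl1⟩ := hl
    have hγl : (0:ℝ) ≤ γ * l := by positivity
    set s : ℝ := Real.sqrt (γ * l) with hs
    have hs0 : 0 ≤ s := Real.sqrt_nonneg _
    have hs2 : s ^ 2 = γ * l := Real.sq_sqrt hγl
    have hXpos : (0:ℝ) < l ^ (1 + δ/2) := Real.rpow_pos_of_pos hl0 _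
    have hpow2 : l ^ 2 ≤ l ^ (1 + δ/2) := by
      have h := Real.rpow_le_rpow_of_exponent_ge hl0 hl1.le
        (show 1 + δ/2 ≤ ((2:ℕ):ℝ) by push_cast; linarith)
      rwa [Real.rpow_natCast] at h
    have hpow2δ : l ^ (2 + δ) ≤ l ^ (1 + δ/2) :=
      Real.rpow_le_rpow_of_exponent_ge hl0 hl1.le (by linarith)
    have hspow : s ^ (2 + δ) = γ ^ (1 + δ/2) * l ^ (1 + δ/2) := by
      rw [hs, Real.sqrt_eq_rpow, ← Real.rpow_mul hγl,
        show (1:ℝ)/2 * (2 + δ) = 1 + δ/2 from by ring, Real.mul_rpow hγ.le hl0.le]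
    have step1 : ∀ w v : ℝ,
        |(∫ ω, (φ ((1 - l) * w + l * v + s * Y ω * w) - φ w) ∂(ℙ : Measure Ω))
          - (l * (φ' w * (v - w)) + l * (γ / 2 * (φ'' w * w ^ 2)))|
        ≤ l ^ (1 + δ/2) * (K * (v ^ 2 + w ^ 2 + |v| ^ (2 + δ) + |w| ^ (2 + δ))) := by
      intro w v
      set c : ℝ := l * (v - w) with hc
      set d : ℝ := s * w with hd
      set D : Ω → ℝ := fun ω => c + d * Y ω with hD
      have hDmeas : Measurable D := measurable_const.add (hYmeas.const_mul d)
      have harg : ∀ ω, (1 - l) * w + l * v + s * Y ω * w = w + D ω := by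
        intro ω; simp only [hD, hc, hd]; ring
      have hDint : Integrable D ℙ := by
        have : Integrable (fun ω => c + d * Y ω) ℙ := (integrable_const c).add (hYint.const_mul d)
        rwa [← hD] at this
      have hD2eq : (fun ω => D ω ^ 2)
          = fun ω => c ^ 2 + ((2*c*d) * Y ω + d ^ 2 * Y ω ^ 2) :=
        funext fun ω => by simp only [hD]; ring
      have hYsum : Integrable (fun ω => (2*c*d) * Y ω + d ^ 2 * Y ω ^ 2) ℙ :=
        (hYint.const_mul _).add (hY2int.const_mul _)
      have hD2int : Integrable (fun ω => D ω ^ 2) ℙ := by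
        rw [hD2eq]
        exact (integrable_const _).add hYsum
      have hintD : ∫ ω, D ω ∂ℙ = c := by
        simp only [hD]
        rw [integral_add (integrable_const c) (hYint.const_mul d),
          integral_const, integral_const_mul, hYmean]
        simp
      have hintD2 : ∫ ω, D ω ^ 2 ∂ℙ = c ^ 2 + d ^ 2 := by
        rw [hD2eq, integral_add (integrable_const _) hYsum,
          integral_add (hYint.const_mul _) (hY2int.const_mul _),
          integral_const, integral_const_mul, integral_const_mul, hYmean, hYvar]
        simp
      set R : Ω → ℝ := fun ω => φ (w + D ω) - φ w - φ' w * D ω - φ'' w * D ω ^ 2 / 2 with hR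
      have hfeq : (fun ω => φ ((1 - l) * w + l * v + s * Y ω * w) - φ w)
          = fun ω => φ' w * D ω + φ'' w * D ω ^ 2 / 2 + R ω := by
        funext ω; rw [harg ω]; simp only [hR]; ring
      have hbint : Integrable (fun ω => φ (w + D ω) - φ w) ℙ := by
        refine Integrable.mono' (integrable_const (2*C))
          (((hφc.measurable.comp (hDmeas.const_add w)).sub measurable_const).aestronglyMeasurable)
          (Filter.Eventually.of_forall fun ω => ?_)
        rw [Real.norm_eq_abs]
        have h1 := (hbound (w + D ω)).1
        have h2 := (hbound w).1
        calc |φ (w + D ω) - φ w| ≤ |φ (w + D ω)| + |φ w| := abs_sub _ _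
          _ ≤ 2 * C := by linarith
      have hRint : Integrable R ℙ := by
        have hRe : R = fun ω => (φ (w + D ω) - φ w) - (φ' w * D ω + φ'' w * D ω ^ 2 / 2) :=
          funext fun ω => by simp only [hR]; ring
        rw [hRe]
        exact hbint.sub ((hDint.const_mul _).add ((hD2int.const_mul _).div_const _))
      have hsplit : ∫ ω, (φ ((1 - l) * w + l * v + s * Y ω * w) - φ w) ∂(ℙ : Measure Ω)
          = φ' w * c + φ'' w * (c ^ 2 + d ^ 2) / 2 + ∫ ω, R ω ∂ℙ := by
        have i1 : Integrable (fun ω => φ' w * D ω) ℙ := hDint.const_mul _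
        have i2 : Integrable (fun ω => φ'' w * D ω ^ 2 / 2) ℙ := by
          exact (hD2int.const_mul _).div_const _
        have i12 : Integrable (fun ω => φ' w * D ω + φ'' w * D ω ^ 2 / 2) ℙ := i1.add i2
        rw [hfeq, integral_add i12 hRint, integral_add i1 i2,
          integral_div, integral_const_mul, integral_const_mul, hintD, hintD2]
      have hRbound : ∀ ω, |R ω| ≤ H * 2 ^ (2+δ) *
          ((l*|v-w|) ^ (2+δ) + (s*|w|) ^ (2+δ) * |Y ω| ^ (2+δ)) := by
        intro ω
        have ht := taylor_holder δ H hδ0 hH φ φ' φ'' hderiv1 hderiv2 hHolder w (D ω)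
        have h1 : |D ω| ≤ l*|v-w| + (s*|w|)*|Y ω| := by
          simp only [hD, hc, hd]
          calc |l*(v-w) + s*w * Y ω| ≤ |l*(v-w)| + |s*w*Y ω| := abs_add_le _ _
            _ = l*|v-w| + (s*|w|)*|Y ω| := by
                rw [abs_mul, abs_mul, abs_mul, abs_of_nonneg hl0.le, abs_of_nonneg hs0]
        have h2 : |D ω| ^ (2+δ) ≤ (l*|v-w| + (s*|w|)*|Y ω|) ^ (2+δ) :=
          Real.rpow_le_rpow (abs_nonneg _) h1 (by linarith)
        have h3 := rpow_add_le_two_rpow (l*|v-w|) ((s*|w|)*|Y ω|) (2+δ)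
          (by positivity) (by positivity) (by linarith)
        have h4 : ((s*|w|)*|Y ω|) ^ (2+δ) = (s*|w|) ^ (2+δ) * |Y ω| ^ (2+δ) :=
          Real.mul_rpow (by positivity) (abs_nonneg _)
        have h5 : |R ω| ≤ H * |D ω| ^ (2+δ) := ht
        calc |R ω| ≤ H * |D ω| ^ (2+δ) := h5
          _ ≤ H * (2 ^ (2+δ) * ((l*|v-w|) ^ (2+δ) + (s*|w|) ^ (2+δ) * |Y ω| ^ (2+δ))) := by
              refine mul_le_mul_of_nonneg_left ?_ hH
              rw [← h4]
              exact h2.trans h3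
          _ = H * 2 ^ (2+δ) * ((l*|v-w|) ^ (2+δ) + (s*|w|) ^ (2+δ) * |Y ω| ^ (2+δ)) := by ring
      have hRbint : Integrable (fun ω => H * 2 ^ (2+δ) *
          ((l*|v-w|) ^ (2+δ) + (s*|w|) ^ (2+δ) * |Y ω| ^ (2+δ))) ℙ := by
        exact ((integrable_const _).add (hYmom.const_mul _)).const_mul _
      have hRintbound : |∫ ω, R ω ∂ℙ| ≤ H * 2 ^ (2+δ) *
          ((l*|v-w|) ^ (2+δ) + (s*|w|) ^ (2+δ) * MY) := by
        have h1 : |∫ ω, R ω ∂ℙ| ≤ ∫ ω, |R ω| ∂ℙ := by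
          simpa [Real.norm_eq_abs] using
            norm_integral_le_integral_norm (μ := (ℙ : Measure Ω)) R
        have h2 : ∫ ω, |R ω| ∂ℙ ≤ ∫ ω, H * 2 ^ (2+δ) *
            ((l*|v-w|) ^ (2+δ) + (s*|w|) ^ (2+δ) * |Y ω| ^ (2+δ)) ∂ℙ :=
          integral_mono hRint.abs hRbint hRbound
        have h3 : ∫ ω, H * 2 ^ (2+δ) *
            ((l*|v-w|) ^ (2+δ) + (s*|w|) ^ (2+δ) * |Y ω| ^ (2+δ)) ∂ℙ
            = H * 2 ^ (2+δ) * ((l*|v-w|) ^ (2+δ) + (s*|w|) ^ (2+δ) * MY) := by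
          rw [integral_const_mul, integral_add (integrable_const _) (hYmom.const_mul _),
            integral_const_mul, ← hMYdef]
          simp
        linarith [h3 ▸ h2]
      -- final assembly of step1
      have hd2γ : d ^ 2 = γ * l * w ^ 2 := by rw [hd, mul_pow, hs2]
      have hid : φ' w * c + φ'' w * (c ^ 2 + d ^ 2) / 2 + (∫ ω, R ω ∂ℙ)
          - (l * (φ' w * (v - w)) + l * (γ / 2 * (φ'' w * w ^ 2)))
          = φ'' w * c ^ 2 / 2 + ∫ ω, R ω ∂ℙ := by
        rw [hd2γ, hc]; ring
      have e0 : |φ'' w * c ^ 2 / 2 + ∫ ω, R ω ∂ℙ|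
          ≤ C * c ^ 2 / 2 + H * 2 ^ (2+δ) * ((l*|v-w|) ^ (2+δ) + (s*|w|) ^ (2+δ) * MY) := by
        have ha := abs_add_le (φ'' w * c ^ 2 / 2) (∫ ω, R ω ∂ℙ)
        have h2 : |φ'' w * c ^ 2 / 2| ≤ C * c ^ 2 / 2 := by
          rw [abs_div, abs_mul, abs_of_nonneg (sq_nonneg c), show |(2:ℝ)| = 2 by norm_num]
          have := mul_le_mul_of_nonneg_right (hbound w).2.2 (sq_nonneg c)
          linarith
        linarith [hRintbound]
      have hc2 : c ^ 2 = l ^ 2 * (v-w) ^ 2 := by rw [hc]; ring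
      have e1 : C * c ^ 2 / 2 ≤ l ^ (1 + δ/2) * (C * (v ^ 2 + w ^ 2)) := by
        calc C * c ^ 2 / 2 = C/2 * (l ^ 2 * (v-w) ^ 2) := by rw [hc2]; ring
          _ ≤ C/2 * (l ^ (1+δ/2) * (v-w) ^ 2) :=
              mul_le_mul_of_nonneg_left
                (mul_le_mul_of_nonneg_right hpow2 (sq_nonneg _)) (by linarith)
          _ ≤ C/2 * (l ^ (1+δ/2) * (2*(v ^ 2 + w ^ 2))) :=
              mul_le_mul_of_nonneg_left
                (mul_le_mul_of_nonneg_left (by nlinarith [sq_nonneg (v+w)]) hXpos.le)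
                (by linarith)
          _ = l ^ (1+δ/2) * (C * (v ^ 2 + w ^ 2)) := by ring
      have e2 : H * 2 ^ (2+δ) * (l*|v-w|) ^ (2+δ)
          ≤ l ^ (1+δ/2) * (H * 2 ^ (2+δ) * 2 ^ (2+δ) * (|v| ^ (2+δ) + |w| ^ (2+δ))) := by
        have hm1 : (l*|v-w|) ^ (2+δ) = l ^ (2+δ) * |v-w| ^ (2+δ) :=
          Real.mul_rpow hl0.le (abs_nonneg _)
        have hvw : |v-w| ^ (2+δ) ≤ 2 ^ (2+δ) * (|v| ^ (2+δ) + |w| ^ (2+δ)) := by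
          have h1 : |v - w| ≤ |v| + |w| := abs_sub v w
          have h2 := Real.rpow_le_rpow (abs_nonneg _) h1 (by linarith : (0:ℝ) ≤ 2+δ)
          exact h2.trans (rpow_add_le_two_rpow _ _ _ (abs_nonneg v) (abs_nonneg w) (by linarith))
        have hrnn : 0 ≤ |v-w| ^ (2+δ) := Real.rpow_nonneg (abs_nonneg _) _
        calc H * 2 ^ (2+δ) * (l*|v-w|) ^ (2+δ)
            = (H * 2 ^ (2+δ)) * (l ^ (2+δ) * |v-w| ^ (2+δ)) := by rw [hm1]
          _ ≤ (H * 2 ^ (2+δ)) * (l ^ (1+δ/2) * |v-w| ^ (2+δ)) :=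
              mul_le_mul_of_nonneg_left
                (mul_le_mul_of_nonneg_right hpow2δ hrnn) (mul_nonneg hH h2p)
          _ ≤ (H * 2 ^ (2+δ)) * (l ^ (1+δ/2) * (2 ^ (2+δ) * (|v| ^ (2+δ) + |w| ^ (2+δ)))) :=
              mul_le_mul_of_nonneg_left
                (mul_le_mul_of_nonneg_left hvw hXpos.le) (mul_nonneg hH h2p)
          _ = l ^ (1+δ/2) * (H * 2 ^ (2+δ) * 2 ^ (2+δ) * (|v| ^ (2+δ) + |w| ^ (2+δ))) := by ring
      have e3 : H * 2 ^ (2+δ) * ((s*|w|) ^ (2+δ) * MY)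
          = l ^ (1+δ/2) * (H * 2 ^ (2+δ) * γ ^ (1+δ/2) * MY * |w| ^ (2+δ)) := by
        rw [Real.mul_rpow hs0 (abs_nonneg _), hspow]; ring
      have hgap : l ^ (1+δ/2) * (C * (v ^ 2 + w ^ 2))
          + l ^ (1+δ/2) * (H * 2 ^ (2+δ) * 2 ^ (2+δ) * (|v| ^ (2+δ) + |w| ^ (2+δ)))
          + l ^ (1+δ/2) * (H * 2 ^ (2+δ) * γ ^ (1+δ/2) * MY * |w| ^ (2+δ))
          ≤ l ^ (1+δ/2) * (K * (v ^ 2 + w ^ 2 + |v| ^ (2+δ) + |w| ^ (2+δ))) := by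
        rw [← mul_add, ← mul_add]
        refine mul_le_mul_of_nonneg_left ?_ hXpos.le
        rw [hK]
        have n1 : (0:ℝ) ≤ |v| ^ (2+δ) := Real.rpow_nonneg (abs_nonneg _) _
        have n2 : (0:ℝ) ≤ |w| ^ (2+δ) := Real.rpow_nonneg (abs_nonneg _) _
        have n3 : (0:ℝ) ≤ H * 2 ^ (2+δ) * 2 ^ (2+δ) := mul_nonneg (mul_nonneg hH h2p) h2p
        have n4 : (0:ℝ) ≤ H * 2 ^ (2+δ) * γ ^ (1+δ/2) * MY :=
          mul_nonneg (mul_nonneg (mul_nonneg hH h2p) hγp) hMY0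
        have ha : (0:ℝ) ≤ v ^ 2 + w ^ 2 := by positivity
        have key2 : (C + H * 2 ^ (2+δ) * 2 ^ (2+δ) + H * 2 ^ (2+δ) * γ ^ (1+δ/2) * MY)
              * (v ^ 2 + w ^ 2 + |v| ^ (2+δ) + |w| ^ (2+δ))
            - (C * (v ^ 2 + w ^ 2) + H * 2 ^ (2+δ) * 2 ^ (2+δ) * (|v| ^ (2+δ) + |w| ^ (2+δ))
              + H * 2 ^ (2+δ) * γ ^ (1+δ/2) * MY * |w| ^ (2+δ))
            = C * (|v| ^ (2+δ) + |w| ^ (2+δ))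
              + (H * 2 ^ (2+δ) * 2 ^ (2+δ)) * (v ^ 2 + w ^ 2)
              + (H * 2 ^ (2+δ) * γ ^ (1+δ/2) * MY) * (v ^ 2 + w ^ 2 + |v| ^ (2+δ)) := by
          ring
        have p1 : (0:ℝ) ≤ C * (|v| ^ (2+δ) + |w| ^ (2+δ)) :=
          mul_nonneg hC (add_nonneg n1 n2)
        have p2 : (0:ℝ) ≤ (H * 2 ^ (2+δ) * 2 ^ (2+δ)) * (v ^ 2 + w ^ 2) := mul_nonneg n3 ha
        have p3 : (0:ℝ) ≤ (H * 2 ^ (2+δ) * γ ^ (1+δ/2) * MY) * (v ^ 2 + w ^ 2 + |v| ^ (2+δ)) :=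
          mul_nonneg n4 (add_nonneg ha n1)
        linarith
      calc |(∫ ω, (φ ((1 - l) * w + l * v + s * Y ω * w) - φ w) ∂(ℙ : Measure Ω))
            - (l * (φ' w * (v - w)) + l * (γ / 2 * (φ'' w * w ^ 2)))|
          = |φ'' w * c ^ 2 / 2 + ∫ ω, R ω ∂ℙ| := by rw [hsplit, hid]
        _ ≤ C * c ^ 2 / 2 + H * 2 ^ (2+δ) * ((l*|v-w|) ^ (2+δ) + (s*|w|) ^ (2+δ) * MY) := e0
        _ = C * c ^ 2 / 2 + H * 2 ^ (2+δ) * (l*|v-w|) ^ (2+δ)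
            + H * 2 ^ (2+δ) * ((s*|w|) ^ (2+δ) * MY) := by ring
        _ ≤ l ^ (1+δ/2) * (C * (v ^ 2 + w ^ 2))
            + l ^ (1+δ/2) * (H * 2 ^ (2+δ) * 2 ^ (2+δ) * (|v| ^ (2+δ) + |w| ^ (2+δ)))
            + l ^ (1+δ/2) * (H * 2 ^ (2+δ) * γ ^ (1+δ/2) * MY * |w| ^ (2+δ)) := by
              rw [← e3]; linarith [e1, e2]
        _ ≤ l ^ (1+δ/2) * (K * (v ^ 2 + w ^ 2 + |v| ^ (2+δ) + |w| ^ (2+δ))) := hgap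
    -- joint measurability of the inner integral
    have hqmeas : Measurable (fun q : (ℝ × ℝ) × Ω =>
        φ ((1 - l) * q.1.1 + l * q.1.2 + s * Y q.2 * q.1.1) - φ q.1.1) := by
      have harg : Measurable (fun q : (ℝ × ℝ) × Ω =>
          (1 - l) * q.1.1 + l * q.1.2 + s * Y q.2 * q.1.1) :=
        ((measurable_fst.fst.const_mul (1-l)).add (measurable_fst.snd.const_mul l)).add
          (((hYmeas.comp measurable_snd).const_mul s).mul measurable_fst.fst)
      exact (hφc.measurable.comp harg).sub (hφc.measurable.comp measurable_fst.fst)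
    have hFsm : StronglyMeasurable (fun p : ℝ × ℝ => ∫ ω,
        (φ ((1 - l) * p.1 + l * p.2 + s * Y ω * p.1) - φ p.1) ∂(ℙ : Measure Ω)) := by
      have := StronglyMeasurable.integral_prod_right' (ν := (ℙ : Measure Ω))
        hqmeas.stronglyMeasurable
      simpa using this
    -- step 2 : the v-integral
    have hψ₂int : Integrable ψ₂ g := by
      rw [hψ₂]
      exact (((integrable_const _).add gi2).add (integrable_const _)).add hg_mom
    have hψ₂bint : ∀ w : ℝ, Integrable
        (fun v => l ^ (1+δ/2) * (K * (v ^ 2 + w ^ 2 + |v| ^ (2+δ) + |w| ^ (2+δ)))) g := by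
      intro w
      exact ((((gi2.add (integrable_const _)).add hg_mom).add
        (integrable_const _)).const_mul K).const_mul _
    have step2 : ∀ w : ℝ,
        |(∫ v, (∫ ω, (φ ((1 - l) * w + l * v + s * Y ω * w) - φ w)
            ∂(ℙ : Measure Ω)) ∂g)
          - l * (φ' w * (m - w) + γ / 2 * (φ'' w * w ^ 2))|
        ≤ l ^ (1 + δ/2) * (K * ψ₂ w) := by
      intro w
      set A : ℝ → ℝ := fun v => ∫ ω,
        (φ ((1 - l) * w + l * v + s * Y ω * w) - φ w) ∂(ℙ : Measure Ω) with hA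
      set T : ℝ → ℝ := fun v =>
        l * (φ' w * (v - w)) + l * (γ / 2 * (φ'' w * w ^ 2)) with hT
      have hAsm : AEStronglyMeasurable A g := by
        have h := hFsm.comp_measurable
          (measurable_const.prodMk measurable_id : Measurable fun v : ℝ => ((w, v) : ℝ × ℝ))
        exact (by simpa [hA, Function.comp_def] using h : StronglyMeasurable A).aestronglyMeasurable
      have hT1int : Integrable (fun v => l * (φ' w * (v - w))) g := by
        exact ((gi1.sub (integrable_const w)).const_mul (φ' w)).const_mul l
      have hTint : Integrable T g := by
        rw [hT]
        exact hT1int.add (integrable_const _)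
      have hTsm : AEStronglyMeasurable T g := hTint.aestronglyMeasurable
      have hdiff : Integrable (fun v => A v - T v) g := by
        refine Integrable.mono' (hψ₂bint w) (hAsm.sub hTsm)
          (Filter.Eventually.of_forall fun v => ?_)
        rw [Real.norm_eq_abs]
        exact step1 w v
      have hAint : Integrable A g :=
        (hdiff.add hTint).congr (Filter.Eventually.of_forall fun v => by
          simp [Pi.add_apply])
      have hintT : ∫ v, T v ∂g = l * (φ' w * (m - w) + γ / 2 * (φ'' w * w ^ 2)) := by
        rw [hT, integral_add hT1int (integrable_const _), integral_const,
          integral_const_mul, integral_const_mul,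
          integral_sub gi1 (integrable_const w), integral_const]
        simp [hm]
        ring
      have j1 : Integrable (fun v : ℝ => v ^ 2 + w ^ 2) g := gi2.add (integrable_const _)
      have j2 : Integrable (fun v : ℝ => v ^ 2 + w ^ 2 + |v| ^ (2+δ)) g := j1.add hg_mom
      have hintbound : ∫ v, l ^ (1+δ/2) * (K * (v ^ 2 + w ^ 2 + |v| ^ (2+δ) + |w| ^ (2+δ))) ∂g
          = l ^ (1+δ/2) * (K * ψ₂ w) := by
        rw [integral_const_mul, integral_const_mul,
          integral_add j2 (integrable_const _),
          integral_add j1 hg_mom,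
          integral_add gi2 (integrable_const _), integral_const, integral_const, hψ₂]
        simp
      have h1 : |∫ v, (A v - T v) ∂g| ≤ l ^ (1+δ/2) * (K * ψ₂ w) := by
        rw [← hintbound]
        refine le_trans ?_ (integral_mono hdiff.abs (hψ₂bint w) (fun v => step1 w v))
        simpa [Real.norm_eq_abs] using
          norm_integral_le_integral_norm (μ := g) (fun v => A v - T v)
      rw [integral_sub hAint hTint, hintT] at h1
      exact h1
    -- step 3 : the w-integral
    have hBsm : AEStronglyMeasurable (fun w => ∫ v, (∫ ω,
        (φ ((1 - l) * w + l * v + s * Y ω * w) - φ w)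
          ∂(ℙ : Measure Ω)) ∂g) g := by
      have h := StronglyMeasurable.integral_prod_right' (ν := g) hFsm
      exact (by simpa using h : StronglyMeasurable _).aestronglyMeasurable
    have hU1int : Integrable (fun w => φ' w * (m - w)) g := by
      have gabs : Integrable (fun w : ℝ => |m| + |w|) g := (integrable_const _).add gi1.abs
      refine Integrable.mono' (gabs.const_mul C)
        ((hφ'c.measurable.mul (measurable_const.sub measurable_id)).aestronglyMeasurable)
        (Filter.Eventually.of_forall fun w => ?_)
      rw [Real.norm_eq_abs, abs_mul]
      have h1 := (hbound w).2.1
      have h2 : |m - w| ≤ |m| + |w| := abs_sub m w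
      have := mul_le_mul (h1) h2 (abs_nonneg _) hC
      linarith
    have hU2int : Integrable (fun w => γ / 2 * (φ'' w * w ^ 2)) g := by
      refine Integrable.mono' ((gi2.const_mul (γ/2*C))
        ) (((hφ''m.mul (measurable_id.pow_const 2)).const_mul _).aestronglyMeasurable)
        (Filter.Eventually.of_forall fun w => ?_)
      rw [Real.norm_eq_abs, abs_mul, abs_mul, abs_of_nonneg (sq_nonneg w),
        abs_of_nonneg (by positivity : (0:ℝ) ≤ γ/2)]
      have h1 := (hbound w).2.2
      have := mul_le_mul_of_nonneg_right h1 (sq_nonneg w)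
      nlinarith [hγ.le]
    have hUint : Integrable (fun w =>
        l * (φ' w * (m - w) + γ / 2 * (φ'' w * w ^ 2))) g :=
      (hU1int.add hU2int).const_mul l
    have hBU : Integrable (fun w => (∫ v, (∫ ω, (φ ((1 - l) * w + l * v + s * Y ω * w) - φ w)
        ∂(ℙ : Measure Ω)) ∂g) - l * (φ' w * (m - w) + γ / 2 * (φ'' w * w ^ 2))) g := by
      refine Integrable.mono' ((hψ₂int.const_mul K).const_mul (l ^ (1+δ/2)))
        (hBsm.sub hUint.aestronglyMeasurable)
        (Filter.Eventually.of_forall fun w => ?_)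
      rw [Real.norm_eq_abs]
      exact step2 w
    have hBint : Integrable (fun w => ∫ v, (∫ ω,
        (φ ((1 - l) * w + l * v + s * Y ω * w) - φ w) ∂(ℙ : Measure Ω)) ∂g) g := by
      exact (hBU.add hUint).congr (Filter.Eventually.of_forall fun w => by
        simp [Pi.add_apply])
    have hintU : ∫ w, l * (φ' w * (m - w) + γ / 2 * (φ'' w * w ^ 2)) ∂g = l * L := by
      rw [integral_const_mul, integral_add hU1int hU2int, integral_const_mul, hL]
      have : ∫ w, φ' w * (m - w) ∂g = -∫ w, φ' w * (w - m) ∂g := by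
        rw [← integral_neg]
        congr 1; funext w; ring
      rw [this]
    have hstep3 : |(∫ w, (∫ v, (∫ ω, (φ ((1 - l) * w + l * v + s * Y ω * w) - φ w)
          ∂(ℙ : Measure Ω)) ∂g) ∂g) - l * L| ≤ l ^ (1+δ/2) * (K * Ψ) := by
      rw [← hintU, ← integral_sub hBint hUint]
      have hb : ∫ w, l ^ (1+δ/2) * (K * ψ₂ w) ∂g = l ^ (1+δ/2) * (K * Ψ) := by
        rw [integral_const_mul, integral_const_mul, hΨ]
      rw [← hb]
      refine le_trans ?_ (integral_mono hBU.abs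
        ((hψ₂int.const_mul K).const_mul (l ^ (1+δ/2)))
        (fun w => step2 w))
      exact abs_integral_le_integral_abs
    -- conclude
    have hlne : l ≠ 0 := ne_of_gt hl0
    have hfact : (1 / l) * (∫ w, (∫ v, (∫ ω, (φ ((1 - l) * w + l * v + s * Y ω * w) - φ w)
          ∂(ℙ : Measure Ω)) ∂g) ∂g) - L
        = (1 / l) * ((∫ w, (∫ v, (∫ ω, (φ ((1 - l) * w + l * v + s * Y ω * w) - φ w)
          ∂(ℙ : Measure Ω)) ∂g) ∂g) - l * L) := by
      rw [mul_sub, one_div, inv_mul_cancel_left₀ hlne]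
    rw [hfact, abs_mul, abs_of_nonneg (by positivity : (0:ℝ) ≤ 1/l)]
    have hls : l ^ (1+δ/2) = l * l ^ (δ/2) := by
      rw [Real.rpow_add hl0, Real.rpow_one]
    calc (1/l) * |(∫ w, (∫ v, (∫ ω, (φ ((1 - l) * w + l * v + s * Y ω * w) - φ w)
          ∂(ℙ : Measure Ω)) ∂g) ∂g) - l * L|
        ≤ (1/l) * (l ^ (1+δ/2) * (K * Ψ)) :=
          mul_le_mul_of_nonneg_left hstep3 (by positivity)
      _ = K * Ψ * l ^ (δ/2) := by
          rw [hls]; field_simp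
  -- squeeze
  rw [tendsto_iff_dist_tendsto_zero]
  have hmem : ∀ᶠ l in 𝓝[Set.Ioo (0:ℝ) 1] (0:ℝ), l ∈ Set.Ioo (0:ℝ) 1 :=
    self_mem_nhdsWithin
  have h0 : Tendsto (fun l : ℝ => (K * Ψ) * l ^ (δ/2)) (𝓝[Set.Ioo (0:ℝ) 1] (0:ℝ)) (𝓝 0) := by
    have hc : ContinuousAt (fun l : ℝ => l ^ (δ/2)) 0 :=
      Real.continuousAt_rpow_const 0 (δ/2) (Or.inr (by positivity))
    have h1 : Tendsto (fun l : ℝ => l ^ (δ/2)) (𝓝[Set.Ioo (0:ℝ) 1] (0:ℝ)) (𝓝 ((0:ℝ) ^ (δ/2))) :=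
      hc.tendsto.mono_left nhdsWithin_le_nhds
    have h2 := h1.const_mul (K * Ψ)
    simpa [Real.zero_rpow (by positivity : δ/2 ≠ 0)] using h2
  refine squeeze_zero' (Filter.Eventually.of_forall fun l => dist_nonneg)
    (hmem.mono fun l hl => ?_) h0
  rw [Real.dist_eq]
  exact key l hl
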